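/- Let R be a linearly ordered commutative ring, let k ≥ 1 be a natural number, and let m, n, p be elements of R with m > 0, n > 0, p > 0 satisfying ∑_{i=0}^{k} ∏_{0 ≤ j ≤ k, j ≠ i} (m + j·n) = p · ∏_{j=0}^{k} (m + j·n), where j denotes the image of the natural number j in R. Then p · m · (m + n) ≤ m + n + k · m. -/

import Mathlib

theorem nagell_second_step
    {R : Type*} [CommRing R] [LinearOrder R] [IsStrictOrderedRing R]
    (k : ℕ) (hk : 1 ≤ k)
    (m n p : R) (hm : 0 < m) (hn : 0 < n) (hp : 0 < p)
    (heq : ∑ i ∈ Finset.range (k + 1),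
          ∏ j ∈ (Finset.range (k + 1)).erase i, (m + (j : R) * n)
        = p * ∏ j ∈ Finset.range (k + 1), (m + (j : R) * n)) :
    p * m * (m + n) ≤ m + n + (k : R) * m := by
  set S := Finset.range (k + 1) with hS
  have hfac : ∀ j ∈ S, (0 : R) < m + (j : R) * n := by
    intro j _
    have : (0 : R) ≤ (j : R) := Nat.cast_nonneg j
    nlinarith
  set P := ∏ j ∈ S, (m + (j : R) * n) with hP
  have hPpos : 0 < P := Finset.prod_pos hfac
  have hterm : ∀ i ∈ S, (m + (i : R) * n) * ∏ j ∈ S.erase i, (m + (j : R) * n) = P :=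
    fun i hi => Finset.mul_prod_erase S (fun j => m + (j : R) * n) hi
  have htpos : ∀ i ∈ S, (0 : R) < ∏ j ∈ S.erase i, (m + (j : R) * n) := by
    intro i hi
    exact Finset.prod_pos fun j hj => hfac j (Finset.mem_of_mem_erase hj)
  have key : ∀ i ∈ S, m * (m + n) * ∏ j ∈ S.erase i, (m + (j : R) * n)
      ≤ (if i = 0 then (m + n) else m) * P := by
    intro i hi
    rcases eq_or_ne i 0 with h | h
    · subst h
      have h0 := hterm 0 hi
      simp only [Nat.cast_zero, zero_mul, add_zero] at h0
      rw [if_pos rfl, ← h0]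
      apply le_of_eq
      ring
    · rw [if_neg h]
      have h1 : (1 : R) ≤ (i : R) := by
        exact_mod_cast Nat.one_le_iff_ne_zero.mpr h
      have h2 : m + n ≤ m + (i : R) * n := by nlinarith
      have ht := htpos i hi
      calc m * (m + n) * ∏ j ∈ S.erase i, (m + (j : R) * n)
          ≤ m * ((m + (i : R) * n) * ∏ j ∈ S.erase i, (m + (j : R) * n)) := by
            have h3 := mul_le_mul_of_nonneg_left (mul_le_mul_of_nonneg_right h2 ht.le) hm.le
            linarith [h3, (mul_assoc m (m + n) (∏ j ∈ S.erase i, (m + (j : R) * n))).symm ▸ h3]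
        _ = m * P := by rw [hterm i hi]
  have hsum : m * (m + n) * (p * P) ≤ (m + n) * P + (k : R) * (m * P) := by
    rw [← heq, Finset.mul_sum]
    calc ∑ i ∈ S, m * (m + n) * ∏ j ∈ S.erase i, (m + (j : R) * n)
        ≤ ∑ i ∈ S, (if i = 0 then (m + n) else m) * P := Finset.sum_le_sum key
      _ = (m + n) * P + (k : R) * (m * P) := by
          rw [hS, Finset.sum_range_succ']
          simp [Finset.sum_const, add_comm]
  have h3 : (p * m * (m + n)) * P ≤ (m + n + (k : R) * m) * P := by nlinarith
  exact le_of_mul_le_mul_right h3 hPpos
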